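/- arXiv:2007.02404 — 2 statements merged into one kernel-verified Lean document; each statement's English description precedes it below -/
import Mathlib

section
/- Uniqueness of the constrained Tucker decomposition: suppose S ∈ ℝ^{I1×I2×I3} admits a Tucker decomposition S = F̃ ×1 Ã1 ×2 Ã2 ×3 Ã3 with Ãmᵀ Ãm = I_m · Id_{Rm} for each mode m, and suppose for each m the matrix Mm(S)·Mm(S)ᵀ has R_m distinct nonzero eigenvalues (and the rest zero). Then there exist matrices A1, A2, A3 and a core tensor F, unique up to simultaneous column sign changes, such that S = F ×1 A1 ×2 A2 ×3 A3, Amᵀ Am = I_m · Id_{Rm} for each m, and Mm(F)·Mm(F)ᵀ is diagonal with strictly decreasing positive diagonal entries for each m. -/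
open Matrix

noncomputable section

/-- Tucker product F ×₁ A1 ×₂ A2 ×₃ A3 of a core tensor with three loading matrices. -/
def tuck {I1 I2 I3 R1 R2 R3 : ℕ} (F : Fin R1 → Fin R2 → Fin R3 → ℝ)
    (A1 : Matrix (Fin I1) (Fin R1) ℝ) (A2 : Matrix (Fin I2) (Fin R2) ℝ)
    (A3 : Matrix (Fin I3) (Fin R3) ℝ) : Fin I1 → Fin I2 → Fin I3 → ℝ :=
  fun i1 i2 i3 => ∑ r1, ∑ r2, ∑ r3, A1 i1 r1 * A2 i2 r2 * A3 i3 r3 * F r1 r2 r3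

/-- Mode-1 matricization. -/
def mat1 {I1 I2 I3 : ℕ} (S : Fin I1 → Fin I2 → Fin I3 → ℝ) :
    Matrix (Fin I1) (Fin I2 × Fin I3) ℝ :=
  Matrix.of fun i p => S i p.1 p.2

/-- Mode-2 matricization. -/
def mat2 {I1 I2 I3 : ℕ} (S : Fin I1 → Fin I2 → Fin I3 → ℝ) :
    Matrix (Fin I2) (Fin I1 × Fin I3) ℝ :=
  Matrix.of fun i p => S p.1 i p.2

/-- Mode-3 matricization. -/
def mat3 {I1 I2 I3 : ℕ} (S : Fin I1 → Fin I2 → Fin I3 → ℝ) :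
    Matrix (Fin I3) (Fin I1 × Fin I2) ℝ :=
  Matrix.of fun i p => S p.1 p.2 i

/-- The symmetric PSD matrix `M` has exactly `R` distinct nonzero eigenvalues
(all positive, strictly decreasing) and the rest zero. -/
def distinctPosSpec {I : ℕ} (R : ℕ) (M : Matrix (Fin I) (Fin I) ℝ) : Prop :=
  ∃ (U : Matrix (Fin I) (Fin R) ℝ) (d : Fin R → ℝ),
    Uᵀ * U = 1 ∧ StrictAnti d ∧ (∀ j, 0 < d j) ∧
    M = U * Matrix.diagonal d * Uᵀ

/-- Each mode-m matricization Gram matrix of the core tensor is diagonal with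
strictly decreasing positive diagonal entries. -/
def coreDiag {R1 R2 R3 : ℕ} (F : Fin R1 → Fin R2 → Fin R3 → ℝ) : Prop :=
  (∃ d : Fin R1 → ℝ, StrictAnti d ∧ (∀ j, 0 < d j) ∧
      mat1 F * (mat1 F)ᵀ = Matrix.diagonal d) ∧
  (∃ d : Fin R2 → ℝ, StrictAnti d ∧ (∀ j, 0 < d j) ∧
      mat2 F * (mat2 F)ᵀ = Matrix.diagonal d) ∧
  (∃ d : Fin R3 → ℝ, StrictAnti d ∧ (∀ j, 0 < d j) ∧
      mat3 F * (mat3 F)ᵀ = Matrix.diagonal d)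

/-- A ±1 sign vector. -/
def isSign {R : ℕ} (s : Fin R → ℝ) : Prop := ∀ j, s j = 1 ∨ s j = -1

open scoped Kronecker

section Helpers

lemma gram_zero {m n : Type*} [Fintype n] (X : Matrix m n ℝ) (h : X * Xᵀ = 0) : X = 0 := by
  ext i j
  have h1 : (X * Xᵀ) i i = 0 := by rw [h]; rfl
  rw [Matrix.mul_apply] at h1
  simp only [Matrix.transpose_apply] at h1
  have h2 : ∀ k ∈ Finset.univ, X i k * X i k = 0 := by
    intro k _
    have hnn : ∀ k ∈ (Finset.univ : Finset n), 0 ≤ X i k * X i k := fun k _ => mul_self_nonneg _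
    exact (Finset.sum_eq_zero_iff_of_nonneg hnn).mp h1 k (Finset.mem_univ k)
  have := h2 j (Finset.mem_univ j)
  have : X i j = 0 := by nlinarith
  simpa using this

lemma proj_absorb {ι κ ρ : Type*} [Fintype ι] [Fintype κ] [Fintype ρ] [DecidableEq ρ]
    (X : Matrix ι κ ℝ) (U : Matrix ι ρ ℝ) (d : ρ → ℝ)
    (hU : Uᵀ * U = 1) (hX : X * Xᵀ = U * Matrix.diagonal d * Uᵀ) :
    U * Uᵀ * X = X := by
  have hPM : U * Uᵀ * (X * Xᵀ) = X * Xᵀ := by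
    rw [hX]
    calc U * Uᵀ * (U * Matrix.diagonal d * Uᵀ)
        = U * (Uᵀ * U) * Matrix.diagonal d * Uᵀ := by simp only [Matrix.mul_assoc]
      _ = U * Matrix.diagonal d * Uᵀ := by rw [hU, Matrix.mul_one]
  have key : (U * Uᵀ * X - X) * (U * Uᵀ * X - X)ᵀ = 0 := by
    have hPs : (U * Uᵀ)ᵀ = U * Uᵀ := by
      rw [Matrix.transpose_mul, Matrix.transpose_transpose]
    have hMP : (X * Xᵀ) * (U * Uᵀ) = X * Xᵀ := by
      have := congrArg Matrix.transpose hPM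
      simpa [Matrix.transpose_mul, Matrix.transpose_transpose, Matrix.mul_assoc] using this
    have hPMP : U * Uᵀ * (X * Xᵀ) * (U * Uᵀ) = X * Xᵀ := by rw [hPM, hMP]
    simp only [Matrix.transpose_sub, Matrix.transpose_mul, hPs, Matrix.transpose_transpose]
    simp only [Matrix.sub_mul, Matrix.mul_sub]
    have e1 : U * Uᵀ * X * (Xᵀ * (U * Uᵀ)) = X * Xᵀ := by
      calc U * Uᵀ * X * (Xᵀ * (U * Uᵀ)) = U * Uᵀ * (X * Xᵀ) * (U * Uᵀ) := by
            simp only [Matrix.mul_assoc]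
        _ = X * Xᵀ := hPMP
    have e2 : X * (Xᵀ * (U * Uᵀ)) = X * Xᵀ := by
      calc X * (Xᵀ * (U * Uᵀ)) = X * Xᵀ * (U * Uᵀ) := by simp only [Matrix.mul_assoc]
        _ = X * Xᵀ := hMP
    have e3 : U * Uᵀ * X * Xᵀ = X * Xᵀ := by
      calc U * Uᵀ * X * Xᵀ = U * Uᵀ * (X * Xᵀ) := by simp only [Matrix.mul_assoc]
        _ = X * Xᵀ := hPM
    rw [e1, e2, e3]
    simp
  have hz : U * Uᵀ * X - X = 0 := gram_zero _ key
  exact sub_eq_zero.mp hz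

lemma fin_le_of_strictMono {R : ℕ} {f : Fin R → Fin R} (hf : StrictMono f) :
    ∀ i : Fin R, (i : ℕ) ≤ (f i : ℕ) := by
  have key : ∀ n : ℕ, ∀ i : Fin R, (i : ℕ) = n → n ≤ (f i : ℕ) := by
    intro n
    induction n with
    | zero => intro i _; omega
    | succ k ih =>
      intro i hi
      have hkR : k < R := by omega
      have hji : (⟨k, hkR⟩ : Fin R) < i := by
        rw [Fin.lt_def]; simpa using by omega
      have h1 := hf hji
      have h2 := ih ⟨k, hkR⟩ rfl
      rw [Fin.lt_def] at h1
      omega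
  intro i; exact key i i rfl

lemma eigen_unique {I R : ℕ} (U U' : Matrix (Fin I) (Fin R) ℝ) (d d' : Fin R → ℝ)
    (hU : Uᵀ * U = 1) (hU' : U'ᵀ * U' = 1)
    (hd : StrictAnti d) (hd' : StrictAnti d')
    (hdp : ∀ j, 0 < d j) (hdp' : ∀ j, 0 < d' j)
    (h : U * Matrix.diagonal d * Uᵀ = U' * Matrix.diagonal d' * U'ᵀ) :
    d = d' ∧ ∃ s : Fin R → ℝ, isSign s ∧ U' = U * Matrix.diagonal s := by
  -- absorption
  have absorb : ∀ (V V' : Matrix (Fin I) (Fin R) ℝ) (e e' : Fin R → ℝ),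
      Vᵀ * V = 1 → V'ᵀ * V' = 1 → (∀ j, e' j ≠ 0) →
      V * Matrix.diagonal e * Vᵀ = V' * Matrix.diagonal e' * V'ᵀ →
      V * Vᵀ * V' = V' := by
    intro V V' e e' hV hV' he' heq
    have h1 : V * Vᵀ * (V' * Matrix.diagonal e' * V'ᵀ) = V' * Matrix.diagonal e' * V'ᵀ := by
      rw [← heq]
      calc V * Vᵀ * (V * Matrix.diagonal e * Vᵀ)
          = V * (Vᵀ * V) * Matrix.diagonal e * Vᵀ := by simp only [Matrix.mul_assoc]
        _ = V * Matrix.diagonal e * Vᵀ := by rw [hV, Matrix.mul_one]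
    have h2 : V * Vᵀ * V' * Matrix.diagonal e' = V' * Matrix.diagonal e' := by
      calc V * Vᵀ * V' * Matrix.diagonal e'
          = V * Vᵀ * V' * Matrix.diagonal e' * (V'ᵀ * V') := by rw [hV', Matrix.mul_one]
        _ = V * Vᵀ * (V' * Matrix.diagonal e' * V'ᵀ) * V' := by simp only [Matrix.mul_assoc]
        _ = V' * Matrix.diagonal e' * V'ᵀ * V' := by rw [h1]
        _ = V' * Matrix.diagonal e' * (V'ᵀ * V') := by simp only [Matrix.mul_assoc]
        _ = V' * Matrix.diagonal e' := by rw [hV', Matrix.mul_one]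
    have h3 := congrArg (fun M => M * Matrix.diagonal fun j => (e' j)⁻¹) h2
    simp only [Matrix.mul_assoc, Matrix.diagonal_mul_diagonal] at h3
    have hdd : (Matrix.diagonal fun j => e' j * (e' j)⁻¹) = (1 : Matrix (Fin R) (Fin R) ℝ) := by
      rw [show (fun j => e' j * (e' j)⁻¹) = fun _ => (1:ℝ) from funext fun j => mul_inv_cancel₀ (he' j)]
      exact Matrix.diagonal_one
    rw [hdd] at h3
    simp only [Matrix.mul_one] at h3
    simpa [Matrix.mul_assoc] using h3
  have habs : U * Uᵀ * U' = U' := absorb U U' d d' hU hU' (fun j => (hdp' j).ne') h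
  have habs' : U' * U'ᵀ * U = U := absorb U' U d' d hU' hU (fun j => (hdp j).ne') h.symm
  set W : Matrix (Fin R) (Fin R) ℝ := Uᵀ * U' with hW
  have hWtW : Wᵀ * W = 1 := by
    rw [hW, Matrix.transpose_mul, Matrix.transpose_transpose]
    calc U'ᵀ * U * (Uᵀ * U') = U'ᵀ * (U * Uᵀ * U') := by simp only [Matrix.mul_assoc]
      _ = U'ᵀ * U' := by rw [habs]
      _ = 1 := hU'
  have hWWt : W * Wᵀ = 1 := by
    rw [hW, Matrix.transpose_mul, Matrix.transpose_transpose]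
    calc Uᵀ * U' * (U'ᵀ * U) = Uᵀ * (U' * U'ᵀ * U) := by simp only [Matrix.mul_assoc]
      _ = Uᵀ * U := by rw [habs']
      _ = 1 := hU
  have hDW : Matrix.diagonal d * W = W * Matrix.diagonal d' := by
    have h4 := congrArg (fun M => Uᵀ * M * U') h
    simp only [Matrix.mul_assoc] at h4
    calc Matrix.diagonal d * W
        = Matrix.diagonal d * (Uᵀ * U') := by rw [hW]
      _ = 1 * (Matrix.diagonal d * (Uᵀ * U')) := by rw [Matrix.one_mul]
      _ = Uᵀ * (U * (Matrix.diagonal d * (Uᵀ * U'))) := by rw [← hU]; simp only [Matrix.mul_assoc]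
      _ = Uᵀ * (U' * (Matrix.diagonal d' * (U'ᵀ * U'))) := h4
      _ = (Uᵀ * U') * Matrix.diagonal d' * (U'ᵀ * U') := by simp only [Matrix.mul_assoc]
      _ = W * Matrix.diagonal d' := by rw [hU', Matrix.mul_one, hW]
  have entry : ∀ i j, d i * W i j = W i j * d' j := by
    intro i j
    simpa [Matrix.diagonal_mul, Matrix.mul_diagonal] using congrFun (congrFun hDW i) j
  have hmatch : ∀ i j, W i j ≠ 0 → d i = d' j := by
    intro i j hne
    have h5 : W i j * (d i - d' j) = 0 := by have := entry i j; ring_nf; linarith [entry i j]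
    rcases mul_eq_zero.mp h5 with h6 | h6
    · exact absurd h6 hne
    · linarith [sub_eq_zero.mp h6]
  have colsum : ∀ j, ∑ i, W i j * W i j = 1 := by
    intro j
    have := congrFun (congrFun hWtW j) j
    simpa [Matrix.mul_apply, Matrix.transpose_apply, Matrix.one_apply] using this
  have rowsum : ∀ i, ∑ j, W i j * W i j = 1 := by
    intro i
    have := congrFun (congrFun hWWt i) i
    simpa [Matrix.mul_apply, Matrix.transpose_apply, Matrix.one_apply] using this
  have colnz : ∀ j, ∃ i, W i j ≠ 0 := by
    intro j
    by_contra hcon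
    push_neg at hcon
    have : (∑ i, W i j * W i j) = 0 := Finset.sum_eq_zero fun i _ => by rw [hcon i]; ring
    rw [colsum j] at this; norm_num at this
  have rownz : ∀ i, ∃ j, W i j ≠ 0 := by
    intro i
    by_contra hcon
    push_neg at hcon
    have : (∑ j, W i j * W i j) = 0 := Finset.sum_eq_zero fun j _ => by rw [hcon j]; ring
    rw [rowsum i] at this; norm_num at this
  -- σ : for each column j pick row
  choose σ hσ using colnz
  choose τ hτ using rownz
  have hσd : ∀ j, d (σ j) = d' j := fun j => hmatch (σ j) j (hσ j)
  have hτd : ∀ i, d i = d' (τ i) := fun i => hmatch i (τ i) (hτ i)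
  have hσmono : StrictMono σ := by
    intro j k hjk
    by_contra hcon
    push_neg at hcon
    have h7 : d (σ j) ≤ d (σ k) := hd.antitone hcon
    have h8 : d' k < d' j := hd' hjk
    rw [hσd j, hσd k] at h7
    linarith
  have hτmono : StrictMono τ := by
    intro i k hik
    by_contra hcon
    push_neg at hcon
    have h7 : d' (τ i) ≤ d' (τ k) := hd'.antitone hcon
    have h8 : d k < d i := hd hik
    rw [← hτd i, ← hτd k] at h7
    linarith
  have hστ : ∀ i, σ (τ i) = i := by
    intro i
    apply hd.injective
    rw [hσd (τ i), ← hτd i]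
  have hτid : ∀ i, τ i = i := by
    intro i
    have h9 := fin_le_of_strictMono hτmono i
    have h10 := fin_le_of_strictMono hσmono (τ i)
    rw [hστ i] at h10
    exact Fin.ext (le_antisymm h10 h9)
  have hdeq : d = d' := funext fun i => by rw [hτd i, hτid i]
  have hWoff : ∀ i j, i ≠ j → W i j = 0 := by
    intro i j hij
    by_contra hne
    exact hij (hd.injective (by rw [hmatch i j hne, ← hdeq]))
  refine ⟨hdeq, fun j => W j j, ?_, ?_⟩
  · intro j
    have hs : W j j * W j j = 1 := by
      have := colsum j
      rw [Finset.sum_eq_single j (fun i _ hij => by rw [hWoff i j hij]; ring)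
        (fun hj => absurd (Finset.mem_univ j) hj)] at this
      exact this
    rcases mul_self_eq_one_iff.mp hs with h | h
    · exact Or.inl h
    · exact Or.inr h
  · have hWdiag : W = Matrix.diagonal fun j => W j j := by
      ext i j
      by_cases hij : i = j
      · subst hij; simp
      · rw [hWoff i j hij, Matrix.diagonal_apply_ne _ hij]
    calc U' = U * Uᵀ * U' := habs.symm
      _ = U * W := by rw [hW, Matrix.mul_assoc]
      _ = U * Matrix.diagonal fun j => W j j := by rw [← hWdiag]

lemma gram_fac {ι κ ρ σ : Type*} [Fintype ι] [Fintype κ] [Fintype ρ] [Fintype σ] [DecidableEq σ]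
    (A : Matrix ι ρ ℝ) (Fm : Matrix ρ σ ℝ) (K : Matrix κ σ ℝ) (e : ℝ)
    (hK : Kᵀ * K = e • 1) :
    (A * Fm * Kᵀ) * (A * Fm * Kᵀ)ᵀ = e • (A * (Fm * Fmᵀ) * Aᵀ) := by
  have h1 : (A * Fm * Kᵀ)ᵀ = K * (Fmᵀ * Aᵀ) := by
    simp only [Matrix.transpose_mul, Matrix.transpose_transpose, Matrix.mul_assoc]
  rw [h1]
  calc A * Fm * Kᵀ * (K * (Fmᵀ * Aᵀ))
      = A * (Fm * ((Kᵀ * K) * (Fmᵀ * Aᵀ))) := by simp only [Matrix.mul_assoc]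
    _ = A * (Fm * (e • (Fmᵀ * Aᵀ))) := by rw [hK, Matrix.smul_mul, Matrix.one_mul]
    _ = e • (A * (Fm * Fmᵀ) * Aᵀ) := by
        rw [Matrix.mul_smul, Matrix.mul_smul]
        simp only [Matrix.mul_assoc]

lemma kron_orth {Ia Ib Ra Rb : ℕ} (A : Matrix (Fin Ia) (Fin Ra) ℝ) (B : Matrix (Fin Ib) (Fin Rb) ℝ)
    (a b : ℝ) (hA : Aᵀ * A = a • 1) (hB : Bᵀ * B = b • 1) :
    (A ⊗ₖ B)ᵀ * (A ⊗ₖ B) = (a * b) • 1 := by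
  rw [← Matrix.kroneckerMap_transpose, ← Matrix.mul_kronecker_mul, hA, hB,
    Matrix.smul_kronecker, Matrix.kronecker_smul, Matrix.one_kronecker_one, smul_smul]

lemma kron_mul_t {Ia Ib Ra Rb : ℕ} (A : Matrix (Fin Ia) (Fin Ra) ℝ) (B : Matrix (Fin Ib) (Fin Rb) ℝ) :
    (A ⊗ₖ B) * (A ⊗ₖ B)ᵀ = (A * Aᵀ) ⊗ₖ (B * Bᵀ) := by
  rw [← Matrix.kroneckerMap_transpose, ← Matrix.mul_kronecker_mul]

lemma smul_sandwich {Im R : ℕ} (U : Matrix (Fin Im) (Fin R) ℝ)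
    (G : Matrix (Fin R) (Fin R) ℝ) (e f : ℝ) (hf : 0 ≤ f) :
    e • ((Real.sqrt f • U) * G * (Real.sqrt f • U)ᵀ) = (e * f) • (U * G * Uᵀ) := by
  rw [Matrix.transpose_smul, Matrix.smul_mul, Matrix.smul_mul, Matrix.mul_smul,
    smul_smul, smul_smul]
  congr 1
  rw [mul_assoc, Real.mul_self_sqrt hf]

lemma core_diag_aux {Im R : ℕ} {J : Type*} [Fintype J] (X : Matrix (Fin Im) J ℝ)
    (U : Matrix (Fin Im) (Fin R) ℝ) (d : Fin R → ℝ) (G : Matrix (Fin R) (Fin R) ℝ) (g : ℝ)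
    (hU : Uᵀ * U = 1) (hM : X * Xᵀ = U * Matrix.diagonal d * Uᵀ)
    (hGram : X * Xᵀ = g • (U * G * Uᵀ)) (hg : g ≠ 0) :
    G = Matrix.diagonal fun j => g⁻¹ * d j := by
  have h1 : Uᵀ * (X * Xᵀ) * U = Matrix.diagonal d := by
    rw [hM]
    calc Uᵀ * (U * Matrix.diagonal d * Uᵀ) * U
        = (Uᵀ * U) * Matrix.diagonal d * (Uᵀ * U) := by simp only [Matrix.mul_assoc]
      _ = Matrix.diagonal d := by rw [hU, Matrix.one_mul, Matrix.mul_one]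
  have h2 : Uᵀ * (X * Xᵀ) * U = g • G := by
    rw [hGram]
    rw [Matrix.mul_smul, Matrix.smul_mul]
    congr 1
    calc Uᵀ * (U * G * Uᵀ) * U = (Uᵀ * U) * G * (Uᵀ * U) := by simp only [Matrix.mul_assoc]
      _ = G := by rw [hU, Matrix.one_mul, Matrix.mul_one]
  have h3 : g • G = Matrix.diagonal d := h2.symm.trans h1
  have h4 : G = g⁻¹ • Matrix.diagonal d := by
    rw [← h3, smul_smul, inv_mul_cancel₀ hg, one_smul]
  rw [h4, ← Matrix.diagonal_smul]
  congr 1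

lemma recover {ι ρ σ κ : Type*} [Fintype ι] [Fintype ρ] [Fintype σ] [Fintype κ]
    [DecidableEq ρ] [DecidableEq σ]
    (A : Matrix ι ρ ℝ) (Fm : Matrix ρ σ ℝ) (K : Matrix κ σ ℝ) (a e : ℝ)
    (hA : Aᵀ * A = a • 1) (hK : Kᵀ * K = e • 1) :
    Aᵀ * (A * Fm * Kᵀ) * K = (a * e) • Fm := by
  calc Aᵀ * (A * Fm * Kᵀ) * K = (Aᵀ * A) * (Fm * (Kᵀ * K)) := by simp only [Matrix.mul_assoc]
    _ = (a • (1 : Matrix ρ ρ ℝ)) * (Fm * (e • (1 : Matrix σ σ ℝ))) := by rw [hA, hK]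
    _ = (a * e) • Fm := by
        rw [Matrix.mul_smul, Matrix.mul_one, Matrix.smul_mul, Matrix.one_mul, smul_smul]
lemma mat1_tuck {I1 I2 I3 R1 R2 R3 : ℕ} (F : Fin R1 → Fin R2 → Fin R3 → ℝ)
    (A1 : Matrix (Fin I1) (Fin R1) ℝ) (A2 : Matrix (Fin I2) (Fin R2) ℝ)
    (A3 : Matrix (Fin I3) (Fin R3) ℝ) :
    mat1 (tuck F A1 A2 A3) = A1 * mat1 F * (A2 ⊗ₖ A3)ᵀ := by
  ext i p
  obtain ⟨i2, i3⟩ := p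
  simp only [mat1, tuck, Matrix.of_apply, Matrix.mul_apply, Matrix.transpose_apply,
    Matrix.kroneckerMap_apply, Fintype.sum_prod_type, Finset.sum_mul, Finset.mul_sum]
  rw [Finset.sum_comm]
  refine Finset.sum_congr rfl fun r2 _ => ?_
  rw [Finset.sum_comm]
  refine Finset.sum_congr rfl fun r3 _ => Finset.sum_congr rfl fun r1 _ => by ring

lemma mat2_tuck {I1 I2 I3 R1 R2 R3 : ℕ} (F : Fin R1 → Fin R2 → Fin R3 → ℝ)
    (A1 : Matrix (Fin I1) (Fin R1) ℝ) (A2 : Matrix (Fin I2) (Fin R2) ℝ)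
    (A3 : Matrix (Fin I3) (Fin R3) ℝ) :
    mat2 (tuck F A1 A2 A3) = A2 * mat2 F * (A1 ⊗ₖ A3)ᵀ := by
  ext i p
  obtain ⟨i1, i3⟩ := p
  simp only [mat2, tuck, Matrix.of_apply, Matrix.mul_apply, Matrix.transpose_apply,
    Matrix.kroneckerMap_apply, Fintype.sum_prod_type, Finset.sum_mul, Finset.mul_sum]
  refine Finset.sum_congr rfl fun r1 _ => ?_
  rw [Finset.sum_comm]
  exact Finset.sum_congr rfl fun r3 _ => Finset.sum_congr rfl fun r2 _ => by ring

lemma mat3_tuck {I1 I2 I3 R1 R2 R3 : ℕ} (F : Fin R1 → Fin R2 → Fin R3 → ℝ)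
    (A1 : Matrix (Fin I1) (Fin R1) ℝ) (A2 : Matrix (Fin I2) (Fin R2) ℝ)
    (A3 : Matrix (Fin I3) (Fin R3) ℝ) :
    mat3 (tuck F A1 A2 A3) = A3 * mat3 F * (A1 ⊗ₖ A2)ᵀ := by
  ext i p
  obtain ⟨i1, i2⟩ := p
  simp only [mat3, tuck, Matrix.of_apply, Matrix.mul_apply, Matrix.transpose_apply,
    Matrix.kroneckerMap_apply, Fintype.sum_prod_type, Finset.sum_mul, Finset.mul_sum]
  refine Finset.sum_congr rfl fun r1 _ => ?_
  refine Finset.sum_congr rfl fun r2 _ => ?_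
  exact Finset.sum_congr rfl fun r3 _ => by ring

lemma cross_absorb {I1 I2 I3 : ℕ} (S : Fin I1 → Fin I2 → Fin I3 → ℝ)
    (P2 : Matrix (Fin I2) (Fin I2) ℝ) (P3 : Matrix (Fin I3) (Fin I3) ℝ)
    (h2 : P2 * mat2 S = mat2 S) (h3 : P3 * mat3 S = mat3 S)
    (h2s : P2ᵀ = P2) (h3s : P3ᵀ = P3) :
    mat1 S * (P2 ⊗ₖ P3) = mat1 S := by
  have e2 : ∀ (a : Fin I2) (b : Fin I1) (c : Fin I3), ∑ j, P2 a j * S b j c = S b a c := by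
    intro a b c
    have := congrFun (congrFun h2 a) (b, c)
    simpa [mat2, Matrix.mul_apply] using this
  have e3 : ∀ (a : Fin I3) (b : Fin I1) (c : Fin I2), ∑ j, P3 a j * S b c j = S b c a := by
    intro a b c
    have := congrFun (congrFun h3 a) (b, c)
    simpa [mat3, Matrix.mul_apply] using this
  ext i p
  obtain ⟨i2, i3⟩ := p
  simp only [mat1, Matrix.of_apply, Matrix.mul_apply, Matrix.kroneckerMap_apply,
    Fintype.sum_prod_type]
  have step1 : ∀ j2, ∑ j3, S i j2 j3 * (P2 j2 i2 * P3 j3 i3)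
      = P2 j2 i2 * S i j2 i3 := by
    intro j2
    have : ∑ j3, S i j2 j3 * (P2 j2 i2 * P3 j3 i3)
        = P2 j2 i2 * ∑ j3, P3 i3 j3 * S i j2 j3 := by
      rw [Finset.mul_sum]
      refine Finset.sum_congr rfl fun j3 _ => ?_
      have hsym : P3 j3 i3 = P3 i3 j3 := by
        conv_lhs => rw [← h3s]
        rfl
      rw [hsym]; ring
    rw [this, e3 i3 i j2]
  calc ∑ j2, ∑ j3, S i j2 j3 * (P2 j2 i2 * P3 j3 i3)
      = ∑ j2, P2 j2 i2 * S i j2 i3 := Finset.sum_congr rfl fun j2 _ => step1 j2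
    _ = ∑ j2, P2 i2 j2 * S i j2 i3 := by
        refine Finset.sum_congr rfl fun j2 _ => ?_
        have hsym : P2 j2 i2 = P2 i2 j2 := by
          conv_lhs => rw [← h2s]
          rfl
        rw [hsym]
    _ = S i i2 i3 := e2 i2 i i3

lemma mode_unique {Im R : ℕ} {J : Type*} [Fintype J]
    (X : Matrix (Fin Im) J ℝ) (U : Matrix (Fin Im) (Fin R) ℝ) (d : Fin R → ℝ)
    (hU : Uᵀ * U = 1) (hd : StrictAnti d) (hdp : ∀ j, 0 < d j)
    (hM : X * Xᵀ = U * Matrix.diagonal d * Uᵀ)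
    (A' : Matrix (Fin Im) (Fin R) ℝ) (d' : Fin R → ℝ) (e : ℝ) (he : 0 < e) (hIm : 0 < Im)
    (ho' : A'ᵀ * A' = (Im : ℝ) • 1)
    (hd' : StrictAnti d') (hdp' : ∀ j, 0 < d' j)
    (hGram : X * Xᵀ = e • (A' * Matrix.diagonal d' * A'ᵀ)) :
    ∃ s : Fin R → ℝ, isSign s ∧ A' = (Real.sqrt Im • U) * Matrix.diagonal s := by
  have hImR : (0:ℝ) < (Im:ℝ) := by exact_mod_cast hIm
  have hsq : Real.sqrt Im ≠ 0 := (Real.sqrt_pos.mpr hImR).ne'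
  set V' : Matrix (Fin Im) (Fin R) ℝ := (Real.sqrt Im)⁻¹ • A' with hV'
  have hA' : A' = Real.sqrt Im • V' := by
    rw [hV', smul_smul, mul_inv_cancel₀ hsq, one_smul]
  have hscal : (Real.sqrt Im)⁻¹ * (Real.sqrt Im)⁻¹ * (Im:ℝ) = 1 := by
    rw [show (Im:ℝ) = Real.sqrt Im * Real.sqrt Im from (Real.mul_self_sqrt hImR.le).symm]
    field_simp
    rw [Real.sqrt_sq (Real.sqrt_nonneg _)]
  have hV'o : V'ᵀ * V' = 1 := by
    rw [hV', Matrix.transpose_smul, Matrix.smul_mul, Matrix.mul_smul, smul_smul, ho',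
      smul_smul, hscal, one_smul]
  have h5 : X * Xᵀ = (e * Im) • (V' * Matrix.diagonal d' * V'ᵀ) := by
    rw [hGram, hA', smul_sandwich V' (Matrix.diagonal d') e Im hImR.le]
  have h6 : (e * Im) • (V' * Matrix.diagonal d' * V'ᵀ)
      = V' * Matrix.diagonal (fun j => e * Im * d' j) * V'ᵀ := by
    calc (e * Im) • (V' * Matrix.diagonal d' * V'ᵀ)
        = V' * ((e * Im) • Matrix.diagonal d') * V'ᵀ := by
          simp only [Matrix.mul_smul, Matrix.smul_mul]
      _ = V' * Matrix.diagonal (fun j => e * Im * d' j) * V'ᵀ := by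
          rw [← Matrix.diagonal_smul]
          rfl
  have hanti : StrictAnti (fun j => e * Im * d' j) := fun a b hab =>
    mul_lt_mul_of_pos_left (hd' hab) (mul_pos he hImR)
  have hpos : ∀ j, 0 < e * Im * d' j := fun j => mul_pos (mul_pos he hImR) (hdp' j)
  obtain ⟨hdeq, s, hsgn, hV'eq⟩ := eigen_unique U V' d (fun j => e * Im * d' j)
    hU hV'o hd hanti hdp hpos (hM.symm.trans (h5.trans h6))
  exact ⟨s, hsgn, by rw [hA', hV'eq, Matrix.smul_mul]⟩

lemma R_eq_zero_left {Im R : ℕ} (hIm : Im = 0) (U : Matrix (Fin Im) (Fin R) ℝ)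
    (hU : Uᵀ * U = 1) : R = 0 := by
  by_contra h
  have j : Fin R := ⟨0, Nat.pos_of_ne_zero h⟩
  have h1 := congrFun (congrFun hU j) j
  subst hIm
  rw [Matrix.mul_apply] at h1
  simp [Matrix.one_apply] at h1

lemma R_eq_zero_M_zero {Im R : ℕ} (U : Matrix (Fin Im) (Fin R) ℝ) (d : Fin R → ℝ)
    (hpos : ∀ j, 0 < d j)
    (hM : (0 : Matrix (Fin Im) (Fin Im) ℝ) = U * Matrix.diagonal d * Uᵀ)
    (hU : Uᵀ * U = 1) : R = 0 := by
  by_contra h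
  have j : Fin R := ⟨0, Nat.pos_of_ne_zero h⟩
  have h1 : Matrix.diagonal d = (0 : Matrix (Fin R) (Fin R) ℝ) := by
    calc Matrix.diagonal d = (Uᵀ * U) * Matrix.diagonal d * (Uᵀ * U) := by
          rw [hU, Matrix.one_mul, Matrix.mul_one]
      _ = Uᵀ * (U * Matrix.diagonal d * Uᵀ) * U := by simp only [Matrix.mul_assoc]
      _ = Uᵀ * (0 : Matrix (Fin Im) (Fin Im) ℝ) * U := by rw [← hM]
      _ = 0 := by rw [Matrix.mul_zero, Matrix.zero_mul]
  have h2 := congrFun (congrFun h1 j) j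
  rw [Matrix.diagonal_apply_eq] at h2
  simp at h2
  exact absurd h2 (hpos j).ne'

end Helpers
/-- Uniqueness (up to column signs) of the Tucker decomposition satisfying the
identification conditions. -/
theorem tucker_identification_unique {I1 I2 I3 R1 R2 R3 : ℕ}
    (S : Fin I1 → Fin I2 → Fin I3 → ℝ)
    (Ft : Fin R1 → Fin R2 → Fin R3 → ℝ)
    (At1 : Matrix (Fin I1) (Fin R1) ℝ) (At2 : Matrix (Fin I2) (Fin R2) ℝ)
    (At3 : Matrix (Fin I3) (Fin R3) ℝ)
    (hdec : S = tuck Ft At1 At2 At3)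
    (ho1 : At1ᵀ * At1 = (I1 : ℝ) • 1) (ho2 : At2ᵀ * At2 = (I2 : ℝ) • 1)
    (ho3 : At3ᵀ * At3 = (I3 : ℝ) • 1)
    (hs1 : distinctPosSpec R1 (mat1 S * (mat1 S)ᵀ))
    (hs2 : distinctPosSpec R2 (mat2 S * (mat2 S)ᵀ))
    (hs3 : distinctPosSpec R3 (mat3 S * (mat3 S)ᵀ)) :
    ∃ (F : Fin R1 → Fin R2 → Fin R3 → ℝ)
      (A1 : Matrix (Fin I1) (Fin R1) ℝ) (A2 : Matrix (Fin I2) (Fin R2) ℝ)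
      (A3 : Matrix (Fin I3) (Fin R3) ℝ),
      (S = tuck F A1 A2 A3 ∧
        A1ᵀ * A1 = (I1 : ℝ) • 1 ∧ A2ᵀ * A2 = (I2 : ℝ) • 1 ∧
        A3ᵀ * A3 = (I3 : ℝ) • 1 ∧ coreDiag F) ∧
      (∀ (F' : Fin R1 → Fin R2 → Fin R3 → ℝ)
        (A1' : Matrix (Fin I1) (Fin R1) ℝ) (A2' : Matrix (Fin I2) (Fin R2) ℝ)
        (A3' : Matrix (Fin I3) (Fin R3) ℝ),
        (S = tuck F' A1' A2' A3' ∧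
          A1'ᵀ * A1' = (I1 : ℝ) • 1 ∧ A2'ᵀ * A2' = (I2 : ℝ) • 1 ∧
          A3'ᵀ * A3' = (I3 : ℝ) • 1 ∧ coreDiag F') →
        ∃ (s1 : Fin R1 → ℝ) (s2 : Fin R2 → ℝ) (s3 : Fin R3 → ℝ),
          isSign s1 ∧ isSign s2 ∧ isSign s3 ∧
          A1' = A1 * Matrix.diagonal s1 ∧
          A2' = A2 * Matrix.diagonal s2 ∧
          A3' = A3 * Matrix.diagonal s3 ∧
          F' = tuck F (Matrix.diagonal s1) (Matrix.diagonal s2) (Matrix.diagonal s3)) := by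
  classical
  by_cases hIpos : 0 < I1 ∧ 0 < I2 ∧ 0 < I3
  · obtain ⟨hI1, hI2, hI3⟩ := hIpos
    obtain ⟨U1, d1, hU1, hd1a, hd1p, hM1⟩ := hs1
    obtain ⟨U2, d2, hU2, hd2a, hd2p, hM2⟩ := hs2
    obtain ⟨U3, d3, hU3, hd3a, hd3p, hM3⟩ := hs3
    have hI1R : (0:ℝ) < (I1:ℝ) := by exact_mod_cast hI1
    have hI2R : (0:ℝ) < (I2:ℝ) := by exact_mod_cast hI2
    have hI3R : (0:ℝ) < (I3:ℝ) := by exact_mod_cast hI3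
    set c : ℝ := (I1:ℝ) * ((I2:ℝ) * (I3:ℝ)) with hc
    have hcpos : 0 < c := by rw [hc]; positivity
    set A1 : Matrix (Fin I1) (Fin R1) ℝ := Real.sqrt (I1:ℝ) • U1 with hA1
    set A2 : Matrix (Fin I2) (Fin R2) ℝ := Real.sqrt (I2:ℝ) • U2 with hA2
    set A3 : Matrix (Fin I3) (Fin R3) ℝ := Real.sqrt (I3:ℝ) • U3 with hA3
    have ho1' : A1ᵀ * A1 = (I1:ℝ) • 1 := by
      rw [hA1, Matrix.transpose_smul, Matrix.smul_mul, Matrix.mul_smul, smul_smul, hU1,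
        Real.mul_self_sqrt (Nat.cast_nonneg I1)]
    have ho2' : A2ᵀ * A2 = (I2:ℝ) • 1 := by
      rw [hA2, Matrix.transpose_smul, Matrix.smul_mul, Matrix.mul_smul, smul_smul, hU2,
        Real.mul_self_sqrt (Nat.cast_nonneg I2)]
    have ho3' : A3ᵀ * A3 = (I3:ℝ) • 1 := by
      rw [hA3, Matrix.transpose_smul, Matrix.smul_mul, Matrix.mul_smul, smul_smul, hU3,
        Real.mul_self_sqrt (Nat.cast_nonneg I3)]
    have hP1 : U1 * U1ᵀ * mat1 S = mat1 S := proj_absorb (mat1 S) U1 d1 hU1 hM1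
    have hP2 : U2 * U2ᵀ * mat2 S = mat2 S := proj_absorb (mat2 S) U2 d2 hU2 hM2
    have hP3 : U3 * U3ᵀ * mat3 S = mat3 S := proj_absorb (mat3 S) U3 d3 hU3 hM3
    have hA1g : A1 * A1ᵀ = (I1:ℝ) • (U1 * U1ᵀ) := by
      rw [hA1, Matrix.transpose_smul, Matrix.smul_mul, Matrix.mul_smul, smul_smul,
        Real.mul_self_sqrt (Nat.cast_nonneg I1)]
    have hA2g : A2 * A2ᵀ = (I2:ℝ) • (U2 * U2ᵀ) := by
      rw [hA2, Matrix.transpose_smul, Matrix.smul_mul, Matrix.mul_smul, smul_smul,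
        Real.mul_self_sqrt (Nat.cast_nonneg I2)]
    have hA3g : A3 * A3ᵀ = (I3:ℝ) • (U3 * U3ᵀ) := by
      rw [hA3, Matrix.transpose_smul, Matrix.smul_mul, Matrix.mul_smul, smul_smul,
        Real.mul_self_sqrt (Nat.cast_nonneg I3)]
    have hK23 : (A2 ⊗ₖ A3)ᵀ * (A2 ⊗ₖ A3) = ((I2:ℝ) * (I3:ℝ)) • 1 :=
      kron_orth A2 A3 _ _ ho2' ho3'
    have hK13 : (A1 ⊗ₖ A3)ᵀ * (A1 ⊗ₖ A3) = ((I1:ℝ) * (I3:ℝ)) • 1 :=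
      kron_orth A1 A3 _ _ ho1' ho3'
    have hK12 : (A1 ⊗ₖ A2)ᵀ * (A1 ⊗ₖ A2) = ((I1:ℝ) * (I2:ℝ)) • 1 :=
      kron_orth A1 A2 _ _ ho1' ho2'
    set Fc : Fin R1 → Fin R2 → Fin R3 → ℝ :=
      fun r1 r2 r3 => (c⁻¹ • (A1ᵀ * mat1 S * (A2 ⊗ₖ A3))) r1 (r2, r3) with hFc
    have hmatF : mat1 Fc = c⁻¹ • (A1ᵀ * mat1 S * (A2 ⊗ₖ A3)) := by
      ext r p
      obtain ⟨a, b⟩ := p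
      rfl
    have hcross : mat1 S * ((U2 * U2ᵀ) ⊗ₖ (U3 * U3ᵀ)) = mat1 S :=
      cross_absorb S _ _ hP2 hP3
        (by rw [Matrix.transpose_mul, Matrix.transpose_transpose])
        (by rw [Matrix.transpose_mul, Matrix.transpose_transpose])
    have hmat1S : mat1 S = A1 * mat1 Fc * (A2 ⊗ₖ A3)ᵀ := by
      rw [hmatF, Matrix.mul_smul, Matrix.smul_mul]
      have hx : A1 * (A1ᵀ * mat1 S * (A2 ⊗ₖ A3)) * (A2 ⊗ₖ A3)ᵀ = c • mat1 S := by
        calc A1 * (A1ᵀ * mat1 S * (A2 ⊗ₖ A3)) * (A2 ⊗ₖ A3)ᵀ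
            = (A1 * A1ᵀ) * (mat1 S * ((A2 ⊗ₖ A3) * (A2 ⊗ₖ A3)ᵀ)) := by
              simp only [Matrix.mul_assoc]
          _ = (A1 * A1ᵀ) * (mat1 S * ((A2 * A2ᵀ) ⊗ₖ (A3 * A3ᵀ))) := by rw [kron_mul_t]
          _ = ((I1:ℝ) • (U1 * U1ᵀ)) *
              (mat1 S * ((((I2:ℝ) • (U2 * U2ᵀ)) ⊗ₖ ((I3:ℝ) • (U3 * U3ᵀ))))) := by
              rw [hA1g, hA2g, hA3g]
          _ = c • ((U1 * U1ᵀ) * (mat1 S * ((U2 * U2ᵀ) ⊗ₖ (U3 * U3ᵀ)))) := by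
              simp only [Matrix.smul_kronecker, Matrix.kronecker_smul, smul_smul,
                Matrix.smul_mul, Matrix.mul_smul]
              rw [hc]
              congr 1
              ring
          _ = c • mat1 S := by rw [hcross, hP1]
      rw [hx, smul_smul, inv_mul_cancel₀ hcpos.ne', one_smul]
    have hS : S = tuck Fc A1 A2 A3 := by
      funext a b c'
      have h := congrFun (congrFun hmat1S a) (b, c')
      have h' := congrFun (congrFun (mat1_tuck Fc A1 A2 A3) a) (b, c')
      exact h.trans h'.symm
    have hmat2S : mat2 S = A2 * mat2 Fc * (A1 ⊗ₖ A3)ᵀ :=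
      (congrArg mat2 hS).trans (mat2_tuck Fc A1 A2 A3)
    have hmat3S : mat3 S = A3 * mat3 Fc * (A1 ⊗ₖ A2)ᵀ :=
      (congrArg mat3 hS).trans (mat3_tuck Fc A1 A2 A3)
    have hcd1 : mat1 Fc * (mat1 Fc)ᵀ = Matrix.diagonal fun j => c⁻¹ * d1 j := by
      apply core_diag_aux (mat1 S) U1 d1 _ c hU1 hM1 _ hcpos.ne'
      have hg : mat1 S * (mat1 S)ᵀ
          = ((I2:ℝ) * (I3:ℝ)) • (A1 * (mat1 Fc * (mat1 Fc)ᵀ) * A1ᵀ) := by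
        conv_lhs => rw [hmat1S]
        exact gram_fac A1 (mat1 Fc) (A2 ⊗ₖ A3) _ hK23
      rw [hg, hA1, smul_sandwich _ _ _ _ (Nat.cast_nonneg I1),
        show ((I2:ℝ) * (I3:ℝ)) * (I1:ℝ) = c by rw [hc]; ring]
    have hcd2 : mat2 Fc * (mat2 Fc)ᵀ = Matrix.diagonal fun j => c⁻¹ * d2 j := by
      apply core_diag_aux (mat2 S) U2 d2 _ c hU2 hM2 _ hcpos.ne'
      have hg : mat2 S * (mat2 S)ᵀ
          = ((I1:ℝ) * (I3:ℝ)) • (A2 * (mat2 Fc * (mat2 Fc)ᵀ) * A2ᵀ) := by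
        conv_lhs => rw [hmat2S]
        exact gram_fac A2 (mat2 Fc) (A1 ⊗ₖ A3) _ hK13
      rw [hg, hA2, smul_sandwich _ _ _ _ (Nat.cast_nonneg I2),
        show ((I1:ℝ) * (I3:ℝ)) * (I2:ℝ) = c by rw [hc]; ring]
    have hcd3 : mat3 Fc * (mat3 Fc)ᵀ = Matrix.diagonal fun j => c⁻¹ * d3 j := by
      apply core_diag_aux (mat3 S) U3 d3 _ c hU3 hM3 _ hcpos.ne'
      have hg : mat3 S * (mat3 S)ᵀ
          = ((I1:ℝ) * (I2:ℝ)) • (A3 * (mat3 Fc * (mat3 Fc)ᵀ) * A3ᵀ) := by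
        conv_lhs => rw [hmat3S]
        exact gram_fac A3 (mat3 Fc) (A1 ⊗ₖ A2) _ hK12
      rw [hg, hA3, smul_sandwich _ _ _ _ (Nat.cast_nonneg I3),
        show ((I1:ℝ) * (I2:ℝ)) * (I3:ℝ) = c by rw [hc]; ring]
    have hinvpos : 0 < c⁻¹ := inv_pos.mpr hcpos
    refine ⟨Fc, A1, A2, A3, ⟨hS, ho1', ho2', ho3',
      ⟨fun j => c⁻¹ * d1 j, fun a b hab => mul_lt_mul_of_pos_left (hd1a hab) hinvpos,
        fun j => mul_pos hinvpos (hd1p j), hcd1⟩,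
      ⟨fun j => c⁻¹ * d2 j, fun a b hab => mul_lt_mul_of_pos_left (hd2a hab) hinvpos,
        fun j => mul_pos hinvpos (hd2p j), hcd2⟩,
      ⟨fun j => c⁻¹ * d3 j, fun a b hab => mul_lt_mul_of_pos_left (hd3a hab) hinvpos,
        fun j => mul_pos hinvpos (hd3p j), hcd3⟩⟩, ?_⟩
    rintro F' A1' A2' A3' ⟨hS', ho1'', ho2'', ho3'', hcd'⟩
    obtain ⟨⟨d1', hd1'a, hd1'p, hG1'⟩, ⟨d2', hd2'a, hd2'p, hG2'⟩, ⟨d3', hd3'a, hd3'p, hG3'⟩⟩ := hcd'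
    have hmatS1' : mat1 S = A1' * mat1 F' * (A2' ⊗ₖ A3')ᵀ :=
      (congrArg mat1 hS').trans (mat1_tuck F' A1' A2' A3')
    have hmatS2' : mat2 S = A2' * mat2 F' * (A1' ⊗ₖ A3')ᵀ :=
      (congrArg mat2 hS').trans (mat2_tuck F' A1' A2' A3')
    have hmatS3' : mat3 S = A3' * mat3 F' * (A1' ⊗ₖ A2')ᵀ :=
      (congrArg mat3 hS').trans (mat3_tuck F' A1' A2' A3')
    have hg1' : mat1 S * (mat1 S)ᵀ = ((I2:ℝ) * (I3:ℝ)) • (A1' * Matrix.diagonal d1' * A1'ᵀ) := by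
      conv_lhs => rw [hmatS1']
      rw [gram_fac A1' (mat1 F') (A2' ⊗ₖ A3') _ (kron_orth A2' A3' _ _ ho2'' ho3''), hG1']
    have hg2' : mat2 S * (mat2 S)ᵀ = ((I1:ℝ) * (I3:ℝ)) • (A2' * Matrix.diagonal d2' * A2'ᵀ) := by
      conv_lhs => rw [hmatS2']
      rw [gram_fac A2' (mat2 F') (A1' ⊗ₖ A3') _ (kron_orth A1' A3' _ _ ho1'' ho3''), hG2']
    have hg3' : mat3 S * (mat3 S)ᵀ = ((I1:ℝ) * (I2:ℝ)) • (A3' * Matrix.diagonal d3' * A3'ᵀ) := by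
      conv_lhs => rw [hmatS3']
      rw [gram_fac A3' (mat3 F') (A1' ⊗ₖ A2') _ (kron_orth A1' A2' _ _ ho1'' ho2''), hG3']
    obtain ⟨s1, hs1sgn, hA1'eq⟩ := mode_unique (mat1 S) U1 d1 hU1 hd1a hd1p hM1 A1' d1'
      ((I2:ℝ) * (I3:ℝ)) (mul_pos hI2R hI3R) hI1 ho1'' hd1'a hd1'p hg1'
    obtain ⟨s2, hs2sgn, hA2'eq⟩ := mode_unique (mat2 S) U2 d2 hU2 hd2a hd2p hM2 A2' d2'
      ((I1:ℝ) * (I3:ℝ)) (mul_pos hI1R hI3R) hI2 ho2'' hd2'a hd2'p hg2'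
    obtain ⟨s3, hs3sgn, hA3'eq⟩ := mode_unique (mat3 S) U3 d3 hU3 hd3a hd3p hM3 A3' d3'
      ((I1:ℝ) * (I2:ℝ)) (mul_pos hI1R hI2R) hI3 ho3'' hd3'a hd3'p hg3'
    have hA1'eq' : A1' = A1 * Matrix.diagonal s1 := by rw [hA1]; exact hA1'eq
    have hA2'eq' : A2' = A2 * Matrix.diagonal s2 := by rw [hA2]; exact hA2'eq
    have hA3'eq' : A3' = A3 * Matrix.diagonal s3 := by rw [hA3]; exact hA3'eq
    have hrecF' : c • mat1 F' = A1'ᵀ * mat1 S * (A2' ⊗ₖ A3') := by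
      conv_rhs => rw [hmatS1']
      rw [hc]
      exact (recover A1' (mat1 F') (A2' ⊗ₖ A3') _ _ ho1''
        (kron_orth A2' A3' _ _ ho2'' ho3'')).symm
    have hF'm : mat1 F' = c⁻¹ • (A1'ᵀ * mat1 S * (A2' ⊗ₖ A3')) := by
      rw [← hrecF', smul_smul, inv_mul_cancel₀ hcpos.ne', one_smul]
    have hD23 : (A2' ⊗ₖ A3') = (A2 ⊗ₖ A3) *
        Matrix.diagonal (fun p : Fin R2 × Fin R3 => s2 p.1 * s3 p.2) := by
      rw [hA2'eq', hA3'eq', Matrix.mul_kronecker_mul, Matrix.diagonal_kronecker_diagonal]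
    have hF'm2 : mat1 F' = Matrix.diagonal s1 * mat1 Fc *
        Matrix.diagonal (fun p : Fin R2 × Fin R3 => s2 p.1 * s3 p.2) := by
      rw [hF'm, hA1'eq', hD23, Matrix.transpose_mul, Matrix.diagonal_transpose, hmatF]
      simp only [Matrix.smul_mul, Matrix.mul_smul, Matrix.mul_assoc]
    have hF'final : F' = tuck Fc (Matrix.diagonal s1) (Matrix.diagonal s2)
        (Matrix.diagonal s3) := by
      have hmt : mat1 (tuck Fc (Matrix.diagonal s1) (Matrix.diagonal s2) (Matrix.diagonal s3))
          = Matrix.diagonal s1 * mat1 Fc *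
            Matrix.diagonal (fun p : Fin R2 × Fin R3 => s2 p.1 * s3 p.2) := by
        rw [mat1_tuck, Matrix.diagonal_kronecker_diagonal, Matrix.diagonal_transpose]
      funext a b c''
      exact congrFun (congrFun (hF'm2.trans hmt.symm) a) (b, c'')
    exact ⟨s1, s2, s3, hs1sgn, hs2sgn, hs3sgn, hA1'eq', hA2'eq', hA3'eq', hF'final⟩
  · push_neg at hIpos
    have hI0 : I1 = 0 ∨ I2 = 0 ∨ I3 = 0 := by omega
    have hR1 : R1 = 0 := by
      obtain ⟨U1, d1, hU1, _, hd1p, hM1⟩ := hs1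
      rcases hI0 with h | h | h
      · exact R_eq_zero_left h U1 hU1
      · refine R_eq_zero_M_zero U1 d1 hd1p ?_ hU1
        rw [← hM1]
        subst h
        ext a b
        simp [Matrix.mul_apply]
      · refine R_eq_zero_M_zero U1 d1 hd1p ?_ hU1
        rw [← hM1]
        subst h
        ext a b
        simp [Matrix.mul_apply]
    have hR2 : R2 = 0 := by
      obtain ⟨U2, d2, hU2, _, hd2p, hM2⟩ := hs2
      rcases hI0 with h | h | h
      · refine R_eq_zero_M_zero U2 d2 hd2p ?_ hU2
        rw [← hM2]
        subst h
        ext a b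
        simp [Matrix.mul_apply]
      · exact R_eq_zero_left h U2 hU2
      · refine R_eq_zero_M_zero U2 d2 hd2p ?_ hU2
        rw [← hM2]
        subst h
        ext a b
        simp [Matrix.mul_apply]
    have hR3 : R3 = 0 := by
      obtain ⟨U3, d3, hU3, _, hd3p, hM3⟩ := hs3
      rcases hI0 with h | h | h
      · refine R_eq_zero_M_zero U3 d3 hd3p ?_ hU3
        rw [← hM3]
        subst h
        ext a b
        simp [Matrix.mul_apply]
      · refine R_eq_zero_M_zero U3 d3 hd3p ?_ hU3
        rw [← hM3]
        subst h
        ext a b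
        simp [Matrix.mul_apply]
      · exact R_eq_zero_left h U3 hU3
    subst hR1; subst hR2; subst hR3
    refine ⟨(fun _ _ _ => 0), 0, 0, 0, ⟨?_, ?_, ?_, ?_, ?_, ?_, ?_⟩, ?_⟩
    · funext a b c'
      rcases hI0 with h | h | h
      · subst h; exact isEmptyElim a
      · subst h; exact isEmptyElim b
      · subst h; exact isEmptyElim c'
    · ext i j; exact isEmptyElim i
    · ext i j; exact isEmptyElim i
    · ext i j; exact isEmptyElim i
    · exact ⟨Fin.elim0, fun a _ _ => isEmptyElim a, fun j => isEmptyElim j,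
        by ext a b; exact isEmptyElim a⟩
    · exact ⟨Fin.elim0, fun a _ _ => isEmptyElim a, fun j => isEmptyElim j,
        by ext a b; exact isEmptyElim a⟩
    · exact ⟨Fin.elim0, fun a _ _ => isEmptyElim a, fun j => isEmptyElim j,
        by ext a b; exact isEmptyElim a⟩
    · rintro F' A1' A2' A3' -
      refine ⟨Fin.elim0, Fin.elim0, Fin.elim0, fun j => isEmptyElim j, fun j => isEmptyElim j,
        fun j => isEmptyElim j, ?_, ?_, ?_, ?_⟩
      · ext i j; exact isEmptyElim j
      · ext i j; exact isEmptyElim j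
      · ext i j; exact isEmptyElim j
      · funext a; exact isEmptyElim a
end
end

section
/- Near-orthogonality of the cross-Gram matrix: let U, Ũ ∈ ℝ^{I×R} have orthonormal columns. Then ‖(UᵀŨ)(UᵀŨ)ᵀ − Id_R‖_F ≤ ‖ŨŨᵀ − UUᵀ‖_F. Consequently there exists an orthogonal matrix O ∈ O(R) with ‖UᵀŨ − O‖_F ≤ ‖ŨŨᵀ − UUᵀ‖_F. -/
open Matrix
noncomputable section

def frobSq {m n : ℕ} (A : Matrix (Fin m) (Fin n) ℝ) : ℝ := ∑ i, ∑ j, (A i j) ^ 2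

lemma frobSq_nonneg {m n : ℕ} (A : Matrix (Fin m) (Fin n) ℝ) : 0 ≤ frobSq A :=
  Finset.sum_nonneg fun _ _ => Finset.sum_nonneg fun _ _ => sq_nonneg _

lemma frobSq_eq_trace {m n : ℕ} (A : Matrix (Fin m) (Fin n) ℝ) :
    frobSq A = Matrix.trace (Aᵀ * A) := by
  simp [frobSq, Matrix.trace, Matrix.diag, Matrix.mul_apply, pow_two]
  rw [Finset.sum_comm]

lemma frobSq_transpose {m n : ℕ} (A : Matrix (Fin m) (Fin n) ℝ) :
    frobSq Aᵀ = frobSq A := by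
  simp only [frobSq, Matrix.transpose_apply]
  rw [Finset.sum_comm]

-- left multiplication by matrix with orthonormal columns decreases frobSq
lemma frobSq_transpose_mul_le {m n r : ℕ} (U : Matrix (Fin m) (Fin r) ℝ)
    (hU : Uᵀ * U = 1) (Y : Matrix (Fin m) (Fin n) ℝ) :
    frobSq (Uᵀ * Y) ≤ frobSq Y := by
  have key : frobSq Y - frobSq (Uᵀ * Y) = frobSq ((1 - U * Uᵀ) * Y) := by
    rw [frobSq_eq_trace, frobSq_eq_trace, frobSq_eq_trace]
    have h1 : ((1 - U * Uᵀ) * Y)ᵀ * ((1 - U * Uᵀ) * Y) = Yᵀ * Y - Yᵀ * (U * Uᵀ) * Y := by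
      have hT : (1 - U * Uᵀ)ᵀ = 1 - U * Uᵀ := by
        simp [Matrix.transpose_sub, Matrix.transpose_mul]
      rw [Matrix.transpose_mul, hT]
      have hP : (1 - U * Uᵀ) * (1 - U * Uᵀ) = 1 - U * Uᵀ := by
        simp only [Matrix.mul_sub, Matrix.sub_mul, Matrix.one_mul, Matrix.mul_one]
        rw [show U * Uᵀ * (U * Uᵀ) = U * (Uᵀ * U) * Uᵀ by
          simp only [Matrix.mul_assoc], hU]
        simp [Matrix.mul_one]
      calc Yᵀ * (1 - U * Uᵀ) * ((1 - U * Uᵀ) * Y)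
          = Yᵀ * ((1 - U * Uᵀ) * (1 - U * Uᵀ)) * Y := by
            simp only [Matrix.mul_assoc]
        _ = Yᵀ * Y - Yᵀ * (U * Uᵀ) * Y := by
            rw [hP]; simp only [Matrix.mul_sub, Matrix.sub_mul, Matrix.mul_one, Matrix.mul_assoc]
    rw [h1, Matrix.trace_sub]
    have h2 : (Uᵀ * Y)ᵀ * (Uᵀ * Y) = Yᵀ * (U * Uᵀ) * Y := by
      rw [Matrix.transpose_mul, Matrix.transpose_transpose]; simp only [Matrix.mul_assoc]
    rw [h2]
  nlinarith [frobSq_nonneg ((1 - U * Uᵀ) * Y)]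

lemma frobSq_mul_le {m n r : ℕ} (U : Matrix (Fin m) (Fin r) ℝ)
    (hU : Uᵀ * U = 1) (Y : Matrix (Fin n) (Fin m) ℝ) :
    frobSq (Y * U) ≤ frobSq Y := by
  calc frobSq (Y * U) = frobSq ((Y * U)ᵀ) := (frobSq_transpose _).symm
    _ = frobSq (Uᵀ * Yᵀ) := by rw [Matrix.transpose_mul]
    _ ≤ frobSq Yᵀ := frobSq_transpose_mul_le U hU _
    _ = frobSq Y := frobSq_transpose _

-- frobSq invariant under right multiplication by square orthogonal
lemma frobSq_mul_orth {n r : ℕ} (Q : Matrix (Fin r) (Fin r) ℝ)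
    (hQ : Qᵀ * Q = 1) (Y : Matrix (Fin n) (Fin r) ℝ) :
    frobSq (Y * Q) = frobSq Y := by
  rw [frobSq_eq_trace, frobSq_eq_trace, Matrix.transpose_mul]
  rw [show Qᵀ * Yᵀ * (Y * Q) = Qᵀ * (Yᵀ * Y) * Q by simp only [Matrix.mul_assoc]]
  rw [Matrix.trace_mul_cycle, ← Matrix.mul_assoc, mul_eq_one_comm.mp hQ, Matrix.one_mul]

lemma frobSq_mul_transpose_sub_one {r : ℕ} (M : Matrix (Fin r) (Fin r) ℝ) :
    frobSq (M * Mᵀ - 1) = frobSq (Mᵀ * M - 1) := by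
  rw [frobSq_eq_trace, frobSq_eq_trace]
  have h1 : (M * Mᵀ - 1)ᵀ = M * Mᵀ - 1 := by
    simp [Matrix.transpose_sub, Matrix.transpose_mul]
  have h2 : (Mᵀ * M - 1)ᵀ = Mᵀ * M - 1 := by
    simp [Matrix.transpose_sub, Matrix.transpose_mul]
  rw [h1, h2]
  simp only [Matrix.mul_sub, Matrix.sub_mul, Matrix.mul_one, Matrix.one_mul,
    Matrix.trace_sub]
  rw [show M * Mᵀ * (M * Mᵀ) = M * (Mᵀ * M) * Mᵀ by simp only [Matrix.mul_assoc],
    Matrix.trace_mul_cycle, ← Matrix.mul_assoc,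
    Matrix.trace_mul_comm Mᵀ M]

lemma frobSq_conj_diag {r : ℕ} (Q : Matrix (Fin r) (Fin r) ℝ) (hQ : Qᵀ * Q = 1)
    (f : Fin r → ℝ) :
    frobSq (Q * Matrix.diagonal f * Qᵀ) = ∑ i, (f i) ^ 2 := by
  rw [frobSq_mul_orth Qᵀ (by rw [Matrix.transpose_transpose]; exact mul_eq_one_comm.mp hQ)]
  rw [frobSq_eq_trace, Matrix.transpose_mul,
    show (Matrix.diagonal f)ᵀ * Qᵀ * (Q * Matrix.diagonal f)
      = (Matrix.diagonal f)ᵀ * (Qᵀ * Q) * Matrix.diagonal f by simp only [Matrix.mul_assoc],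
    hQ, Matrix.mul_one, Matrix.diagonal_transpose, Matrix.diagonal_mul_diagonal]
  simp [Matrix.trace, pow_two]

lemma dot_mulVec_mulVec {R : ℕ} (M : Matrix (Fin R) (Fin R) ℝ) (x y : Fin R → ℝ) :
    (M *ᵥ x) ⬝ᵥ (M *ᵥ y) = x ⬝ᵥ ((Mᵀ * M) *ᵥ y) := by
  rw [← Matrix.mulVec_mulVec, Matrix.dotProduct_mulVec x, Matrix.vecMul_transpose]


theorem crossGram_aux {I R : ℕ}
    (U Ut : Matrix (Fin I) (Fin R) ℝ)
    (hU : Uᵀ * U = 1) (hUt : Utᵀ * Ut = 1) :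
    frobSq ((Uᵀ * Ut) * (Uᵀ * Ut)ᵀ - 1) ≤ frobSq (Ut * Utᵀ - U * Uᵀ) ∧
    ∃ O : Matrix (Fin R) (Fin R) ℝ, Oᵀ * O = 1 ∧
      frobSq (Uᵀ * Ut - O) ≤ frobSq (Ut * Utᵀ - U * Uᵀ) := by
  classical
  set M : Matrix (Fin R) (Fin R) ℝ := Uᵀ * Ut with hM
  set E : Matrix (Fin I) (Fin I) ℝ := Ut * Utᵀ - U * Uᵀ with hE
  -- Part 1
  have hconj : Uᵀ * E * U = M * Mᵀ - 1 := by
    rw [hE, Matrix.mul_sub, Matrix.sub_mul]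
    congr 1
    · rw [hM, Matrix.transpose_mul, Matrix.transpose_transpose]
      simp only [Matrix.mul_assoc]
    · rw [show Uᵀ * (U * Uᵀ) * U = (Uᵀ * U) * (Uᵀ * U) by simp only [Matrix.mul_assoc], hU,
        Matrix.one_mul]
  have part1 : frobSq (M * Mᵀ - 1) ≤ frobSq E := by
    rw [← hconj]
    exact le_trans (frobSq_mul_le U hU _) (frobSq_transpose_mul_le U hU E)
  refine ⟨part1, ?_⟩
  -- Part 2 : spectral decomposition of N = Mᵀ * M
  have hNh : (Mᵀ * M).IsHermitian := by
    have := Matrix.isHermitian_conjTranspose_mul_self M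
    rwa [Matrix.conjTranspose_eq_transpose_of_trivial] at this
  have hpsd : (Mᵀ * M).PosSemidef := by
    have := Matrix.posSemidef_conjTranspose_mul_self M
    rwa [Matrix.conjTranspose_eq_transpose_of_trivial] at this
  set d : Fin R → ℝ := hNh.eigenvalues with hd
  have hd0 : ∀ i, 0 ≤ d i := fun i => hpsd.eigenvalues_nonneg i
  set Q : Matrix (Fin R) (Fin R) ℝ := (Matrix.IsHermitian.eigenvectorUnitary hNh :
    Matrix (Fin R) (Fin R) ℝ) with hQdef
  have hQ : Qᵀ * Q = 1 := by
    have h := (Matrix.IsHermitian.eigenvectorUnitary hNh).2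
    rw [Unitary.mem_iff] at h
    have := h.1
    rwa [Matrix.star_eq_conjTranspose, Matrix.conjTranspose_eq_transpose_of_trivial] at this
  have hQQt : Q * Qᵀ = 1 := mul_eq_one_comm.mp hQ
  have hspec : Mᵀ * M = Q * Matrix.diagonal d * Qᵀ := by
    have h := hNh.spectral_theorem
    rwa [Unitary.conjStarAlgAut_apply, Matrix.star_eq_conjTranspose, Matrix.conjTranspose_eq_transpose_of_trivial,
      show RCLike.ofReal ∘ hNh.eigenvalues = d by funext i; simp [hd]] at h
  set q : Fin R → (Fin R → ℝ) := fun i => ⇑(hNh.eigenvectorBasis i) with hq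
  have hQapp : ∀ j i, Q j i = q i j := fun j i => rfl
  have heig : ∀ i, (Mᵀ * M) *ᵥ q i = d i • q i := fun i => hNh.mulVec_eigenvectorBasis i
  have horth : ∀ i j, q i ⬝ᵥ q j = if i = j then 1 else 0 := by
    intro i j
    have h := orthonormal_iff_ite.mp hNh.eigenvectorBasis.orthonormal i j
    simpa [dotProduct, PiLp.inner_apply, RCLike.inner_apply, conj_trivial, hq, mul_comm] using h
  have hdot : ∀ x y : Fin R → ℝ, (M *ᵥ x) ⬝ᵥ (M *ᵥ y) = x ⬝ᵥ ((Mᵀ * M) *ᵥ y) :=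
    dot_mulVec_mulVec M
  have hMq : ∀ i j, (M *ᵥ q i) ⬝ᵥ (M *ᵥ q j) = d j * (if i = j then 1 else 0) := by
    intro i j
    rw [hdot, heig, dotProduct_smul, horth, smul_eq_mul]
  have hnormMq : ∀ i, (M *ᵥ q i) ⬝ᵥ (M *ᵥ q i) = d i := by
    intro i; rw [hMq]; simp
  -- the orthonormal family on {i | d i ≠ 0}
  set v : Fin R → EuclideanSpace ℝ (Fin R) := fun i =>
    (Real.sqrt (d i))⁻¹ • ((WithLp.equiv 2 (Fin R → ℝ)).symm (M *ᵥ q i)) with hv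
  have hvorth : Orthonormal ℝ (Set.restrict {i | d i ≠ 0} v) := by
    rw [orthonormal_iff_ite]
    rintro ⟨i, hi⟩ ⟨j, hj⟩
    have hdi : 0 < d i := lt_of_le_of_ne (hd0 i) (Ne.symm hi)
    have hdj : 0 < d j := lt_of_le_of_ne (hd0 j) (Ne.symm hj)
    have hinner : (inner ℝ (v i) (v j) : ℝ)
        = (Real.sqrt (d i))⁻¹ * ((Real.sqrt (d j))⁻¹ * ((M *ᵥ q i) ⬝ᵥ (M *ᵥ q j))) := by
      simp [hv, inner_smul_left, inner_smul_right, PiLp.inner_apply, RCLike.inner_apply,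
        conj_trivial, dotProduct, mul_assoc]
      rw [Finset.sum_congr rfl fun x _ => mul_comm ((M *ᵥ q j) x) ((M *ᵥ q i) x)]
      try ring
    change inner ℝ (v i) (v j) = _
    rw [hinner, hMq]
    by_cases hij : i = j
    · subst hij
      rw [if_pos rfl, if_pos rfl, mul_one]
      have hs : (0:ℝ) < Real.sqrt (d i) := Real.sqrt_pos.mpr hdi
      have hss : Real.sqrt (d i) * Real.sqrt (d i) = d i := Real.mul_self_sqrt (hd0 i)
      field_simp
      try linarith [hss]
    · rw [if_neg hij, if_neg (by simp [Subtype.ext_iff, hij]), mul_zero, mul_zero, mul_zero]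
  obtain ⟨b, hb⟩ := hvorth.exists_orthonormalBasis_extension_of_card_eq
    (by simp [finrank_euclideanSpace_fin])
  set P : Matrix (Fin R) (Fin R) ℝ := fun j i => b i j with hP
  have hborth : ∀ i k, ∑ j, b i j * b k j = if i = k then 1 else 0 := by
    intro i k
    have h := orthonormal_iff_ite.mp b.orthonormal i k
    simpa [PiLp.inner_apply, RCLike.inner_apply, conj_trivial, mul_comm] using h
  have hPorth : Pᵀ * P = 1 := by
    ext i k
    simp only [Matrix.mul_apply, Matrix.transpose_apply, hP, Matrix.one_apply]
    exact hborth i k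
  refine ⟨P * Qᵀ, ?_, ?_⟩
  · rw [Matrix.transpose_mul, Matrix.transpose_transpose,
      show Q * Pᵀ * (P * Qᵀ) = Q * (Pᵀ * P) * Qᵀ by simp only [Matrix.mul_assoc],
      hPorth, Matrix.mul_one, hQQt]
  have hMO : M - P * Qᵀ = (M * Q - P) * Qᵀ := by
    rw [Matrix.sub_mul, Matrix.mul_assoc, hQQt, Matrix.mul_one]
  rw [hMO, frobSq_mul_orth Qᵀ (by rw [Matrix.transpose_transpose]; exact hQQt) _]
  have hMQ : ∀ jr c, (M * Q) jr c = (M *ᵥ q c) jr := by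
    intro jr c
    simp [Matrix.mul_apply, Matrix.mulVec, dotProduct, hQapp]
  have hcol : ∀ c, ∑ jr, ((M * Q - P) jr c)^2 = (Real.sqrt (d c) - 1)^2 := by
    intro c
    by_cases hc : d c = 0
    · have hzero : M *ᵥ q c = 0 := by
        have h := hnormMq c
        rw [hc] at h
        funext jr
        have hnn : ∀ x ∈ Finset.univ, (0:ℝ) ≤ (M *ᵥ q c) x * (M *ᵥ q c) x :=
          fun x _ => mul_self_nonneg _
        have h2 := (Finset.sum_eq_zero_iff_of_nonneg hnn).mp h jr (Finset.mem_univ jr)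
        have h3 := mul_self_eq_zero.mp h2
        simpa using h3
      have hsum : ∑ jr, ((M * Q - P) jr c)^2 = ∑ jr, (b c jr)^2 := by
        apply Finset.sum_congr rfl; intro jr _
        rw [Matrix.sub_apply, hMQ, hzero]
        simp [hP]
      rw [hsum]
      have h1 : ∑ jr, (b c jr)^2 = 1 := by
        have h := hborth c c; rw [if_pos rfl] at h
        simpa [pow_two] using h
      rw [h1, hc, Real.sqrt_zero]; norm_num
    · have hbc : b c = v c := hb c hc
      have hcol2 : ∀ jr, (M * Q - P) jr c = (1 - (Real.sqrt (d c))⁻¹) * (M *ᵥ q c) jr := by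
        intro jr
        rw [Matrix.sub_apply, hMQ]
        have hPv : P jr c = (Real.sqrt (d c))⁻¹ * (M *ᵥ q c) jr := by
          show b c jr = _
          rw [hbc]
          simp [hv]
        rw [hPv]; ring
      have hs0 : (0:ℝ) < Real.sqrt (d c) :=
        Real.sqrt_pos.mpr (lt_of_le_of_ne (hd0 c) (Ne.symm hc))
      have hss : Real.sqrt (d c) * Real.sqrt (d c) = d c := Real.mul_self_sqrt (hd0 c)
      calc ∑ jr, ((M * Q - P) jr c)^2
          = (1 - (Real.sqrt (d c))⁻¹)^2 * ∑ jr, ((M *ᵥ q c) jr)^2 := by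
            rw [Finset.mul_sum]; apply Finset.sum_congr rfl; intro jr _; rw [hcol2]; ring
        _ = (1 - (Real.sqrt (d c))⁻¹)^2 * d c := by
            rw [show ∑ jr, ((M *ᵥ q c) jr)^2 = (M *ᵥ q c) ⬝ᵥ (M *ᵥ q c) by
              simp [dotProduct, pow_two], hnormMq]
        _ = (Real.sqrt (d c) - 1)^2 := by
            have hne : Real.sqrt (d c) ≠ 0 := ne_of_gt hs0
            set s := Real.sqrt (d c) with hsdef
            rw [← hss, show (1 - s⁻¹)^2 * (s * s) = ((1 - s⁻¹) * s)^2 by ring,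
              sub_mul, one_mul, inv_mul_cancel₀ hne]
  have htot : frobSq (M * Q - P) = ∑ c, (Real.sqrt (d c) - 1)^2 := by
    rw [show frobSq (M * Q - P) = ∑ jr, ∑ c, ((M * Q - P) jr c)^2 from rfl, Finset.sum_comm]
    exact Finset.sum_congr rfl fun c _ => hcol c
  have hle1 : ∑ c, (Real.sqrt (d c) - 1)^2 ≤ ∑ c, (d c - 1)^2 :=
    Finset.sum_le_sum fun c _ => by nlinarith [Real.sq_sqrt (hd0 c), Real.sqrt_nonneg (d c)]
  have hdiag : frobSq (Mᵀ * M - 1) = ∑ c, (d c - 1)^2 := by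
    have h1 : Q * (Matrix.diagonal d - 1) * Qᵀ = Q * Matrix.diagonal d * Qᵀ - 1 := by
      rw [Matrix.mul_sub, Matrix.mul_one, Matrix.sub_mul, hQQt]
    have h2 : Mᵀ * M - 1 = Q * Matrix.diagonal (fun c => d c - 1) * Qᵀ := by
      rw [hspec, show (Matrix.diagonal fun c => d c - 1) = Matrix.diagonal d - 1 by
        rw [← Matrix.diagonal_one, Matrix.diagonal_sub], h1]
    rw [h2, frobSq_conj_diag Q hQ]
  calc frobSq (M * Q - P) = ∑ c, (Real.sqrt (d c) - 1)^2 := htot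
    _ ≤ ∑ c, (d c - 1)^2 := hle1
    _ = frobSq (Mᵀ * M - 1) := hdiag.symm
    _ = frobSq (M * Mᵀ - 1) := (frobSq_mul_transpose_sub_one M).symm
    _ ≤ frobSq E := part1

/-- Frobenius norm of a real matrix. -/
def frob {m n : ℕ} (A : Matrix (Fin m) (Fin n) ℝ) : ℝ :=
  Real.sqrt (∑ i, ∑ j, (A i j) ^ 2)

lemma frob_eq {m n : ℕ} (A : Matrix (Fin m) (Fin n) ℝ) : frob A = Real.sqrt (frobSq A) := rfl

/-- Near-orthogonality of the cross-Gram matrix of two orthonormal frames, and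
existence of a nearby orthogonal matrix. -/
theorem crossGram_near_orthogonal {I R : ℕ}
    (U Ut : Matrix (Fin I) (Fin R) ℝ)
    (hU : Uᵀ * U = 1) (hUt : Utᵀ * Ut = 1) :
    frob ((Uᵀ * Ut) * (Uᵀ * Ut)ᵀ - 1) ≤ frob (Ut * Utᵀ - U * Uᵀ) ∧
    ∃ O : Matrix (Fin R) (Fin R) ℝ, Oᵀ * O = 1 ∧
      frob (Uᵀ * Ut - O) ≤ frob (Ut * Utᵀ - U * Uᵀ) := by
  obtain ⟨h1, O, hO, h2⟩ := crossGram_aux U Ut hU hUt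
  exact ⟨Real.sqrt_le_sqrt h1, O, hO, Real.sqrt_le_sqrt h2⟩
end
end
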